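/- arXiv:1603.07510 — 5 statements merged into one kernel-verified Lean document; each statement's English description precedes it below -/
import Mathlib

section
/- In any lattice-ordered group (or Riesz space), defining b(x,y) = |x| ⊓ y⁺ − |x| ⊓ y⁻, one has |b(x,y)| = |x| ⊓ |y| for all x, y. -/
/-- Lacey's function `b(x,y) = |x| ⊓ y⁺ − |x| ⊓ y⁻` in a lattice-ordered group. -/
def bLacey {α : Type*} [Lattice α] [AddCommGroup α] (x y : α) : α :=
  |x| ⊓ (y ⊔ 0) - |x| ⊓ ((-y) ⊔ 0)

/-- In any lattice-ordered group, `|b(x,y)| = |x| ⊓ |y|`. -/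
theorem stmt2 {α : Type*} [Lattice α] [AddCommGroup α]
    [CovariantClass α α (· + ·) (· ≤ ·)] (x y : α) :
    |bLacey x y| = |x| ⊓ |y| := by
  letI := AddCommGroup.toDistribLattice α
  have hy : (y ⊔ 0) ⊓ ((-y) ⊔ 0) = 0 := posPart_inf_negPart_eq_zero y
  have hsum : (y ⊔ 0) + ((-y) ⊔ 0) = |y| := posPart_add_negPart y
  set u := |x| ⊓ (y ⊔ 0) with hu
  set v := |x| ⊓ ((-y) ⊔ 0) with hv
  have huv : u ⊓ v = 0 := by
    rw [hu, hv, ← inf_inf_distrib_left, hy, inf_eq_right.mpr (abs_nonneg x)]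
  have hsup2 : (y ⊔ 0) ⊔ ((-y) ⊔ 0) = |y| := by
    have := inf_add_sup (y ⊔ 0) ((-y) ⊔ 0)
    rw [hy, zero_add, hsum] at this
    exact this
  have hsup : u ⊔ v = |x| ⊓ |y| := by
    rw [hu, hv, ← inf_sup_left, hsup2]
  have : |bLacey x y| = |u - v| := rfl
  rw [this, ← sup_sub_inf_eq_abs_sub v u, inf_comm v u, sup_comm v u, huv, hsup, sub_zero]
end

section
/- Let r > 2 and let X be a Banach function space over a measure space that is exactly r-convex and has strictly monotone norm (0 ≤ u ≤ v and ‖u‖ = ‖v‖ imply u = v). If x, y ∈ X satisfy ‖x + ty‖^r + ‖x − ty‖^r ≤ 2(‖x‖^r + t^r‖y‖^r) for all t ∈ [0,1], then x and y are disjoint: |x| ⊓ |y| = 0. -/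
private lemma stmt12_aux (r M K c : ℝ) (hr : 2 < r) (hM0 : 0 < M) (hc0 : 0 < c)
    (hKnn : 0 ≤ K)
    (key : ∀ t : ℝ, 0 < t → t ≤ 1 → M + t^2 * c ≤ (M ^ r + t ^ r * K ^ r) ^ r⁻¹) :
    False := by
  have hr0 : (0:ℝ) < r := by linarith
  have hrne : r ≠ 0 := ne_of_gt hr0
  have hr2 : (0:ℝ) < r - 2 := by linarith
  set ε := 2 * (M ^ (r-2:ℝ)) * M * c with hεdef
  have hε : 0 < ε := by
    have := Real.rpow_pos_of_pos hM0 (r-2)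
    positivity
  set D := K^r + 1 with hDdef
  have hD0 : 0 < D := by
    have := Real.rpow_nonneg hKnn r
    positivity
  set t := min 1 ((ε/(2*D)) ^ (r-2)⁻¹) with htdef
  have ht0 : 0 < t := by
    apply lt_min one_pos
    exact Real.rpow_pos_of_pos (div_pos hε (by positivity)) _
  have ht1 : t ≤ 1 := min_le_left _ _
  have htr2 : t ^ (r-2:ℝ) ≤ ε/(2*D) := by
    have hle : t ≤ (ε/(2*D)) ^ (r-2)⁻¹ := min_le_right _ _
    have h := Real.rpow_le_rpow ht0.le hle hr2.le
    rwa [← Real.rpow_mul (le_of_lt (div_pos hε (by positivity))),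
      inv_mul_cancel₀ (ne_of_gt hr2), Real.rpow_one] at h
  have hkey := key t ht0 ht1
  have hMK0 : 0 ≤ M^r + t^r*K^r := by
    have h1 := Real.rpow_nonneg hM0.le r
    have h2 := Real.rpow_nonneg hKnn r
    have h3 := Real.rpow_nonneg ht0.le r
    positivity
  have hMt : 0 < M + t^2*c := by positivity
  have hpow : (M + t^2*c) ^ r ≤ M^r + t^r*K^r := by
    have h := Real.rpow_le_rpow hMt.le hkey hr0.le
    rwa [← Real.rpow_mul hMK0, inv_mul_cancel₀ hrne, Real.rpow_one] at h
  have e3 : (M + t^2*c) ^ r = (M + t^2*c)^(r-2:ℝ) * (M + t^2*c)^(2:ℝ) := by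
    rw [← Real.rpow_add hMt]; congr 1; ring
  have e4 : M ^ r = M^(r-2:ℝ) * M^(2:ℝ) := by
    rw [← Real.rpow_add hM0]; congr 1; ring
  have h13 : M^(r-2:ℝ) ≤ (M + t^2*c)^(r-2:ℝ) := by
    apply Real.rpow_le_rpow hM0.le _ hr2.le
    nlinarith [sq_nonneg t]
  have etwo : ∀ z : ℝ, 0 ≤ z → z ^ (2:ℝ) = z^2 := by
    intro z hz
    rw [show (2:ℝ) = ((2:ℕ):ℝ) by norm_num, Real.rpow_natCast]
  have hsq : M^(2:ℝ) + 2*M*(t^2*c) ≤ (M + t^2*c)^(2:ℝ) := by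
    rw [etwo _ hM0.le, etwo _ hMt.le]
    nlinarith [sq_nonneg (t^2*c)]
  have hlow : M^r + ε * t^2 ≤ (M + t^2*c) ^ r := by
    rw [e3, e4, hεdef]
    have hP : 0 < M^(r-2:ℝ) := Real.rpow_pos_of_pos hM0 _
    calc M^(r-2:ℝ) * M^(2:ℝ) + 2 * M ^ (r-2:ℝ) * M * c * t^2
        = M^(r-2:ℝ) * (M^(2:ℝ) + 2*M*(t^2*c)) := by ring
      _ ≤ M^(r-2:ℝ) * (M + t^2*c)^(2:ℝ) := by
          exact mul_le_mul_of_nonneg_left hsq hP.le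
      _ ≤ (M + t^2*c)^(r-2:ℝ) * (M + t^2*c)^(2:ℝ) := by
          apply mul_le_mul_of_nonneg_right h13 (Real.rpow_nonneg hMt.le _)
  have hcomb : ε * t^2 ≤ t^r * K^r := by
    have := hlow.trans hpow
    linarith
  have e5 : t ^ r = t^(r-2:ℝ) * t^2 := by
    rw [← etwo t ht0.le, ← Real.rpow_add ht0]; congr 1; ring
  have ht2pos : 0 < t^2 := by positivity
  have hfin : ε ≤ t^(r-2:ℝ) * K^r := by
    rw [e5] at hcomb
    have h : ε * t^2 ≤ (t^(r-2:ℝ) * K^r) * t^2 := by nlinarith [hcomb]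
    exact le_of_mul_le_mul_right h ht2pos
  have hKD : K^r ≤ D := by rw [hDdef]; linarith
  have hfin2 : t^(r-2:ℝ) * K^r ≤ (ε/(2*D)) * D := by
    apply mul_le_mul htr2 hKD (Real.rpow_nonneg hKnn r)
      (le_of_lt (div_pos hε (by positivity)))
  have heD : (ε/(2*D)) * D = ε/2 := by field_simp
  rw [heD] at hfin2
  linarith


/-- In an exactly `r`-convex Banach function space with strictly monotone norm
(`r > 2`), the condition `D_r` (for all `t ∈ [0,1]`,
`‖x + ty‖^r + ‖x − ty‖^r ≤ 2(‖x‖^r + t^r‖y‖^r)`) forces `x` and `y` to be disjoint. -/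
theorem stmt12 {α : Type*} (X : Submodule ℝ (α → ℝ)) (nrm : (α → ℝ) → ℝ) (r : ℝ)
    (hr : 2 < r)
    (hnonneg : ∀ f : α → ℝ, 0 ≤ nrm f)
    (hmono : ∀ f g : α → ℝ, (∀ a, |f a| ≤ |g a|) → nrm f ≤ nrm g)
    (hhom : ∀ (c : ℝ) (f : α → ℝ), nrm (c • f) = |c| * nrm f)
    (hadd : ∀ f g : α → ℝ, nrm (f + g) ≤ nrm f + nrm g)
    (hstrict : ∀ u v : α → ℝ, (∀ a, 0 ≤ u a) → (∀ a, u a ≤ v a) → nrm u = nrm v → u = v)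
    (hconv : ∀ x ∈ X, ∀ y ∈ X,
      nrm (fun a => (|x a| ^ r + |y a| ^ r) ^ r⁻¹) ≤ (nrm x ^ r + nrm y ^ r) ^ r⁻¹)
    (x y : α → ℝ) (hx : x ∈ X) (hy : y ∈ X)
    (hD : ∀ t ∈ Set.Icc (0 : ℝ) 1,
      nrm (x + t • y) ^ r + nrm (x - t • y) ^ r
        ≤ 2 * (nrm x ^ r + t ^ r * nrm y ^ r)) :
    ∀ a, min |x a| |y a| = 0 := by
  by_contra hcon
  push_neg at hcon
  obtain ⟨a₀, ha₀⟩ := hcon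
  have hmin : 0 < min |x a₀| |y a₀| :=
    lt_of_le_of_ne (le_min (abs_nonneg _) (abs_nonneg _)) (Ne.symm ha₀)
  have hx0 : 0 < |x a₀| := lt_of_lt_of_le hmin (min_le_left _ _)
  have hy0 : 0 < |y a₀| := lt_of_lt_of_le hmin (min_le_right _ _)
  have hr0 : (0:ℝ) < r := by linarith
  have hrne : r ≠ 0 := ne_of_gt hr0
  have hr2 : (0:ℝ) < r - 2 := by linarith
  set M := nrm x with hM
  set K := nrm y with hK
  -- helper versions of the norm axioms for explicit lambdas
  have hhom' : ∀ (s : ℝ) (f : α → ℝ), nrm (fun a => s * f a) = |s| * nrm f := by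
    intro s f
    have h := hhom s f
    have e : s • f = fun a => s * f a := by
      funext a; simp [Pi.smul_apply, smul_eq_mul]
    rwa [e] at h
  have h0 : nrm (fun _ : α => (0:ℝ)) = 0 := by
    have h := hhom' 0 x
    simpa using h
  have habsx : nrm (fun a => |x a|) = M := by
    apply le_antisymm
    · exact hmono _ _ (fun a => by rw [abs_abs])
    · exact hmono _ _ (fun a => by rw [abs_abs])
  have habsy : nrm (fun a => |y a|) = K := by
    apply le_antisymm
    · exact hmono _ _ (fun a => by rw [abs_abs])
    · exact hmono _ _ (fun a => by rw [abs_abs])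
  -- the overlap direction k
  set k : α → ℝ := fun a => min |x a| ((y a)^2 / (2*|x a| + |y a|)) with hkdef
  have hk0 : ∀ a, 0 ≤ k a := by
    intro a
    exact le_min (abs_nonneg _) (div_nonneg (sq_nonneg _)
      (by positivity))
  have hkx : ∀ a, k a ≤ |x a| := fun a => min_le_left _ _
  have hkq : ∀ a, k a * (2*|x a| + k a) ≤ (y a)^2 := by
    intro a
    by_cases hya : y a = 0
    · have hk0' : k a = 0 := by
        simp [hkdef, hya, min_eq_right (abs_nonneg (x a))]
      simp [hk0', hya]
    · have hyabs : 0 < |y a| := abs_pos.mpr hya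
      have hd : 0 < 2*|x a| + |y a| := by
        have := abs_nonneg (x a); linarith
      have hky : k a ≤ (y a)^2 / (2*|x a| + |y a|) := min_le_right _ _
      have hkyabs : k a ≤ |y a| := by
        refine hky.trans ?_
        rw [div_le_iff₀ hd]
        have : (y a)^2 = |y a|^2 := (sq_abs _).symm
        nlinarith [abs_nonneg (x a)]
      calc k a * (2*|x a| + k a)
          ≤ ((y a)^2/(2*|x a|+|y a|)) * (2*|x a| + |y a|) := by
            apply mul_le_mul hky (by linarith) (by nlinarith [hk0 a, abs_nonneg (x a)])
              (div_nonneg (sq_nonneg _) hd.le)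
        _ = (y a)^2 := div_mul_cancel₀ _ (ne_of_gt hd)
  have hka₀ : 0 < k a₀ := by
    apply lt_min hx0
    apply div_pos
    · have : (y a₀)^2 = |y a₀|^2 := (sq_abs _).symm
      rw [this]; positivity
    · positivity
  -- M > 0
  have hM0 : 0 < M := by
    rcases lt_or_eq_of_le (hnonneg x) with h | h
    · exact h
    · exfalso
      have heq : nrm (fun _ : α => (0:ℝ)) = nrm (fun a => |x a|) := by
        rw [h0, habsx, hM]; exact h
      have := hstrict (fun _ => 0) (fun a => |x a|) (fun a => le_refl 0)
        (fun a => abs_nonneg _) heq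
      have := congrFun this a₀
      have this : (0:ℝ) = |x a₀| := this
      exact absurd this.symm (ne_of_gt hx0)
  -- c > 0 : the strict-monotonicity gap in the direction k
  set c := M - nrm (fun a => |x a| - k a) with hcdef
  have hNd_le : nrm (fun a => |x a| - k a) ≤ M := by
    rw [← habsx]
    apply hmono
    intro a
    rw [abs_of_nonneg (by linarith [hkx a, hk0 a] : (0:ℝ) ≤ |x a| - k a), abs_abs]
    linarith [hk0 a]
  have hc0 : 0 < c := by
    rw [hcdef]
    rcases lt_or_eq_of_le hNd_le with h | h
    · linarith
    · exfalso
      have := hstrict (fun a => |x a| - k a) (fun a => |x a|)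
        (fun a => by show (0:ℝ) ≤ |x a| - k a; linarith [hkx a, hk0 a])
        (fun a => by show |x a| - k a ≤ |x a|; linarith [hk0 a])
        (by rw [habsx, h])
      have := congrFun this a₀
      simp at this
      exact absurd this (ne_of_gt hka₀)
  -- the key estimate for all t ∈ (0,1]
  have key : ∀ t : ℝ, 0 < t → t ≤ 1 → M + t^2 * c ≤ (M ^ r + t ^ r * K ^ r) ^ r⁻¹ := by
    intro t ht0 ht1
    set vt : α → ℝ := fun a => Real.sqrt ((x a)^2 + t^2*(y a)^2) with hvt
    -- pointwise lower bound : |x| + t² k ≤ vt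
    have hP3 : ∀ a, |x a| + t^2 * k a ≤ vt a := by
      intro a
      have hq := hkq a
      have h0k := hk0 a
      have ht2 : t^2 ≤ 1 := by nlinarith
      have e : (|x a| + t^2*k a)^2
          = (x a)^2 + t^2*(2*|x a| * k a + (k a)^2*t^2) := by
        rw [← sq_abs (x a)]; ring
      have s2 : (k a)^2*t^2 ≤ (k a)^2 := by nlinarith [sq_nonneg (k a)]
      have s3 : 2*|x a| * k a + (k a)^2*t^2 ≤ (y a)^2 := by nlinarith
      have h1 : (|x a| + t^2*k a)^2 ≤ (x a)^2 + t^2*(y a)^2 := by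
        rw [e]
        have := mul_le_mul_of_nonneg_left s3 (sq_nonneg t)
        linarith
      have h2 : 0 ≤ |x a| + t^2*k a :=
        add_nonneg (abs_nonneg _) (mul_nonneg (sq_nonneg t) h0k)
      calc |x a| + t^2*k a = Real.sqrt ((|x a| + t^2*k a)^2) := (Real.sqrt_sq h2).symm
        _ ≤ vt a := Real.sqrt_le_sqrt h1
    -- pointwise upper bound : 2^(1/r) vt ≤ Φ
    have hpw : ∀ a, (2:ℝ) ^ r⁻¹ * vt a
        ≤ (|x a + t * y a| ^ r + |x a - t * y a| ^ r) ^ r⁻¹ := by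
      intro a
      set A0 := |x a + t * y a| with hA0def
      set B0 := |x a - t * y a| with hB0def
      set S := (x a)^2 + t^2*(y a)^2 with hSdef
      have hS : 0 ≤ S := by positivity
      have hA0 : 0 ≤ A0 := abs_nonneg _
      have hB0 : 0 ≤ B0 := abs_nonneg _
      have hsum : (1/2 : ℝ)*(A0^2) + (1/2 : ℝ)*(B0^2) = S := by
        rw [hA0def, hB0def, sq_abs, sq_abs, hSdef]; ring
      have hr2' : (1:ℝ) ≤ r/2 := by linarith
      -- convexity of z ^ (r/2)
      have hcv := (convexOn_rpow hr2').2 (Set.mem_Ici.mpr (sq_nonneg A0))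
        (Set.mem_Ici.mpr (sq_nonneg B0)) (by norm_num : (0:ℝ) ≤ 1/2)
        (by norm_num : (0:ℝ) ≤ 1/2) (by norm_num)
      simp only [smul_eq_mul] at hcv
      rw [hsum] at hcv
      -- (A0^2)^(r/2) = A0^r
      have e2r : (2:ℝ) * (r/2) = r := by ring
      have eA : (A0^2 : ℝ) ^ (r/2) = A0 ^ r := by
        rw [← Real.rpow_natCast A0 2, ← Real.rpow_mul hA0]
        norm_num [e2r]
      have eB : (B0^2 : ℝ) ^ (r/2) = B0 ^ r := by
        rw [← Real.rpow_natCast B0 2, ← Real.rpow_mul hB0]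
        norm_num [e2r]
      rw [eA, eB] at hcv
      -- so 2 * S^(r/2) ≤ A0^r + B0^r
      have h2S : 2 * S ^ (r/2) ≤ A0 ^ r + B0 ^ r := by linarith
      have hSv : (S ^ (r/2) : ℝ) ^ r⁻¹ = vt a := by
        rw [← Real.rpow_mul hS]
        have hhalf : r/2 * r⁻¹ = 1/2 := by
          field_simp
        rw [hhalf]
        exact (Real.sqrt_eq_rpow S).symm
      calc (2:ℝ) ^ r⁻¹ * vt a = (2 * S ^ (r/2)) ^ r⁻¹ := by
            rw [Real.mul_rpow (by norm_num) (Real.rpow_nonneg hS _), hSv]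
        _ ≤ (A0 ^ r + B0 ^ r) ^ r⁻¹ :=
            Real.rpow_le_rpow (by positivity) h2S (by positivity)
    -- norm chain
    have hxty : x + t • y ∈ X := X.add_mem hx (X.smul_mem t hy)
    have hxmty : x - t • y ∈ X := X.sub_mem hx (X.smul_mem t hy)
    have hc1 := hconv _ hxty _ hxmty
    have hfeq : (fun a => (|(x + t • y) a| ^ r + |(x - t • y) a| ^ r) ^ r⁻¹)
        = fun a => (|x a + t * y a| ^ r + |x a - t * y a| ^ r) ^ r⁻¹ := by
      funext a
      simp [Pi.add_apply, Pi.sub_apply, Pi.smul_apply, smul_eq_mul]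
    rw [hfeq] at hc1
    have hAB : nrm (x + t • y) ^ r + nrm (x - t • y) ^ r ≤ 2*(M^r + t^r*K^r) :=
      hD t ⟨ht0.le, ht1⟩
    have hc2 : nrm (fun a => (|x a + t * y a| ^ r + |x a - t * y a| ^ r) ^ r⁻¹)
        ≤ (2*(M^r + t^r*K^r)) ^ r⁻¹ := by
      refine hc1.trans (Real.rpow_le_rpow ?_ hAB (by positivity))
      exact add_nonneg (Real.rpow_nonneg (hnonneg _) _) (Real.rpow_nonneg (hnonneg _) _)
    have hMK0 : 0 ≤ M^r + t^r*K^r := by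
      have := Real.rpow_nonneg hM0.le r
      have := Real.rpow_nonneg (hnonneg y) r
      have := Real.rpow_nonneg ht0.le r
      positivity
    have h5 : nrm (fun a => (2:ℝ)^r⁻¹ * vt a)
        ≤ nrm (fun a => (|x a + t * y a| ^ r + |x a - t * y a| ^ r) ^ r⁻¹) := by
      apply hmono
      intro a
      have hnn1 : (0:ℝ) ≤ (2:ℝ)^r⁻¹ * vt a := by
        apply mul_nonneg (Real.rpow_nonneg (by norm_num) _) (Real.sqrt_nonneg _)
      have hnn2 : (0:ℝ) ≤ (|x a + t * y a| ^ r + |x a - t * y a| ^ r) ^ r⁻¹ :=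
        Real.rpow_nonneg (add_nonneg (Real.rpow_nonneg (abs_nonneg _) _)
          (Real.rpow_nonneg (abs_nonneg _) _)) _
      rw [abs_of_nonneg hnn1, abs_of_nonneg hnn2]
      exact hpw a
    have h6 : nrm (fun a => (2:ℝ)^r⁻¹ * vt a) = (2:ℝ)^r⁻¹ * nrm vt := by
      rw [hhom' ((2:ℝ)^r⁻¹) vt, abs_of_nonneg (Real.rpow_nonneg (by norm_num) _)]
    have h7 : (2*(M^r + t^r*K^r)) ^ r⁻¹ = (2:ℝ)^r⁻¹ * (M^r + t^r*K^r) ^ r⁻¹ :=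
      Real.mul_rpow (by norm_num) hMK0
    have h8 : (2:ℝ)^r⁻¹ * nrm vt ≤ (2:ℝ)^r⁻¹ * (M^r + t^r*K^r) ^ r⁻¹ := by
      rw [← h6, ← h7]
      exact h5.trans hc2
    have h2pos : (0:ℝ) < (2:ℝ)^r⁻¹ := Real.rpow_pos_of_pos (by norm_num) _
    have hnv : nrm vt ≤ (M^r + t^r*K^r) ^ r⁻¹ := le_of_mul_le_mul_left h8 h2pos
    -- lower bound for nrm (|x| + t² k)
    have e' : (fun a => (1+t^2) * |x a|)
        = (fun a => |x a| + t^2 * k a) + (fun a => t^2 * (|x a| - k a)) := by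
      funext a
      simp only [Pi.add_apply]
      ring
    have h9 : nrm (fun a => (1+t^2) * |x a|)
        ≤ nrm (fun a => |x a| + t^2 * k a) + nrm (fun a => t^2 * (|x a| - k a)) := by
      rw [e']; exact hadd _ _
    have h10 : nrm (fun a => (1+t^2) * |x a|) = (1+t^2) * M := by
      rw [hhom' (1+t^2) (fun a => |x a|), habsx, abs_of_pos (by positivity)]
    have h11 : nrm (fun a => t^2 * (|x a| - k a)) = t^2 * (M - c) := by
      rw [hhom' (t^2) (fun a => |x a| - k a), abs_of_nonneg (sq_nonneg t), hcdef]
      ring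
    have h12 : M + t^2 * c ≤ nrm (fun a => |x a| + t^2 * k a) := by
      rw [h10, h11] at h9
      linarith
    have h13 : nrm (fun a => |x a| + t^2 * k a) ≤ nrm vt := by
      apply hmono
      intro a
      have hnn1 : (0:ℝ) ≤ |x a| + t^2 * k a :=
        add_nonneg (abs_nonneg _) (mul_nonneg (sq_nonneg t) (hk0 a))
      rw [abs_of_nonneg hnn1, abs_of_nonneg (Real.sqrt_nonneg _)]
      exact hP3 a
    exact (h12.trans h13).trans hnv
  exact stmt12_aux r M K c hr hM0 hc0 (hnonneg y) key
end

section
/- Let r > 2 and let X, Y be Banach function spaces over measure spaces, both exactly r-convex, with Y having strictly monotone norm. Then every linear isometry T : X → Y preserves disjointness: if |x| ⊓ |y| = 0 in X then |Tx| ⊓ |Ty| = 0 in Y. -/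
open Real Set

private lemma stmt13_sq (c₁ c₂ t : ℝ) (hc1 : 0 ≤ c₁) (hc2 : 0 ≤ c₂)
    (ht0 : 0 < t) (ht1 : t ≤ 1) :
    (c₁ + t ^ 2 * min c₁ (c₂ ^ 2 / (2 * (c₁ + c₂)))) ^ 2 ≤ c₁ ^ 2 + t ^ 2 * c₂ ^ 2 := by
  rcases eq_or_lt_of_le (add_nonneg hc1 hc2) with h0 | hD
  · have h1 : c₁ = 0 := by linarith [abs_nonneg c₁]
    have h2 : c₂ = 0 := by linarith
    subst h1; subst h2
    norm_num
  · set w : ℝ := c₂ ^ 2 / (2 * (c₁ + c₂)) with hwdef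
    have hDne : (2 : ℝ) * (c₁ + c₂) ≠ 0 := by positivity
    have hw : w * (2 * (c₁ + c₂)) = c₂ ^ 2 := div_mul_cancel₀ _ hDne
    have hw0 : 0 ≤ w := div_nonneg (sq_nonneg _) (by linarith)
    have hwle : w ≤ c₂ := by
      rw [hwdef, div_le_iff₀ (by linarith)]
      nlinarith
    have hmle : min c₁ w ≤ w := min_le_right _ _
    have hm0 : 0 ≤ min c₁ w := le_min hc1 hw0
    have ht2 : 0 < t ^ 2 := by positivity
    have hstep : c₁ + t ^ 2 * min c₁ w ≤ c₁ + t ^ 2 * w := by nlinarith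
    have htsq : t ^ 2 ≤ 1 := by nlinarith
    have h7 : t ^ 2 * w ≤ c₂ := le_trans (by nlinarith) hwle
    have hprod : 0 ≤ t ^ 2 * w * (2 * c₂ - t ^ 2 * w) :=
      mul_nonneg (by positivity) (by linarith)
    have hw2 : t ^ 2 * c₂ ^ 2 = t ^ 2 * w * (2 * (c₁ + c₂)) := by rw [← hw]; ring
    have hkey : (c₁ + t ^ 2 * w) ^ 2 ≤ c₁ ^ 2 + t ^ 2 * c₂ ^ 2 := by nlinarith [hprod, hw2]
    have hmono : (c₁ + t ^ 2 * min c₁ w) ^ 2 ≤ (c₁ + t ^ 2 * w) ^ 2 := by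
      apply pow_le_pow_left₀ (by positivity) hstep
    linarith

private lemma stmt13_key (r : ℝ) (hr : 2 < r) (U V t : ℝ) (ht0 : 0 < t) (ht1 : t ≤ 1) :
    (2 : ℝ) ^ r⁻¹ * (|U| + t ^ 2 * min |U| (V ^ 2 / (2 * (|U| + |V|)))) ≤
      (|U + t * V| ^ r + |U - t * V| ^ r) ^ r⁻¹ := by
  have hrne : r ≠ 0 := by linarith
  have hr2 : (1 : ℝ) ≤ r / 2 := by linarith
  set L : ℝ := |U| + t ^ 2 * min |U| (V ^ 2 / (2 * (|U| + |V|))) with hLdef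
  have hmin0 : 0 ≤ min |U| (V ^ 2 / (2 * (|U| + |V|))) :=
    le_min (abs_nonneg _) (div_nonneg (sq_nonneg _) (by positivity))
  have hL0 : 0 ≤ L := by have := abs_nonneg U; positivity
  -- L^2 ≤ U^2 + t^2 V^2
  have h1 : L ^ 2 ≤ U ^ 2 + t ^ 2 * V ^ 2 := by
    have := stmt13_sq |U| |V| t (abs_nonneg _) (abs_nonneg _) ht0 ht1
    rw [sq_abs, sq_abs] at this
    exact this
  -- L^r ≤ (U^2+t^2V^2)^(r/2)
  have hS0 : (0:ℝ) ≤ U ^ 2 + t ^ 2 * V ^ 2 := by positivity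
  have hLr : L ^ r = (L ^ 2) ^ (r / 2) := by
    rw [← Real.rpow_natCast L 2, ← Real.rpow_mul hL0]
    congr 1
    push_cast
    ring
  have h2 : L ^ r ≤ (U ^ 2 + t ^ 2 * V ^ 2) ^ (r / 2) := by
    rw [hLr]
    exact Real.rpow_le_rpow (sq_nonneg _) h1 (by linarith)
  -- power mean: 2*(U^2+t^2V^2)^(r/2) ≤ |U+tV|^r + |U-tV|^r
  have habs : ∀ z : ℝ, (z ^ 2) ^ (r / 2) = |z| ^ r := by
    intro z
    rw [← sq_abs, ← Real.rpow_natCast |z| 2, ← Real.rpow_mul (abs_nonneg z)]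
    congr 1
    push_cast
    ring
  have hPQ : (U + t * V) ^ 2 + (U - t * V) ^ 2 = 2 * (U ^ 2 + t ^ 2 * V ^ 2) := by ring
  have hconv := (convexOn_rpow hr2).2 (mem_Ici.2 (sq_nonneg (U + t * V)))
      (mem_Ici.2 (sq_nonneg (U - t * V))) (by norm_num : (0:ℝ) ≤ 1/2) (by norm_num : (0:ℝ) ≤ 1/2)
      (by norm_num : (1:ℝ)/2 + 1/2 = 1)
  simp only [smul_eq_mul] at hconv
  have hmid : (1:ℝ)/2 * (U + t * V) ^ 2 + 1/2 * (U - t * V) ^ 2 = U ^ 2 + t ^ 2 * V ^ 2 := by ring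
  rw [hmid, habs, habs] at hconv
  have h3 : 2 * (U ^ 2 + t ^ 2 * V ^ 2) ^ (r / 2) ≤ |U + t * V| ^ r + |U - t * V| ^ r := by
    linarith
  -- combine
  have h4 : ((2:ℝ) ^ r⁻¹ * L) ^ r ≤ |U + t * V| ^ r + |U - t * V| ^ r := by
    rw [Real.mul_rpow (Real.rpow_nonneg (by norm_num) _) hL0,
      Real.rpow_inv_rpow (by norm_num) hrne]
    nlinarith
  have h5 := Real.rpow_le_rpow (Real.rpow_nonneg (mul_nonneg (Real.rpow_nonneg (by norm_num) _) hL0) r) h4 (by positivity : (0:ℝ) ≤ r⁻¹)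
  rwa [Real.rpow_rpow_inv (mul_nonneg (Real.rpow_nonneg (by norm_num) _) hL0) hrne] at h5

/-- Every linear isometry from an exactly `r`-convex Banach function space (`r > 2`)
into an exactly `r`-convex Banach function space with strictly monotone norm
preserves disjointness. -/
theorem stmt13 {α β : Type*} (X : Submodule ℝ (α → ℝ)) (Y : Submodule ℝ (β → ℝ))
    (nX : (α → ℝ) → ℝ) (nY : (β → ℝ) → ℝ) (r : ℝ) (hr : 2 < r)
    (hXnonneg : ∀ f : α → ℝ, 0 ≤ nX f)
    (hXmono : ∀ f g : α → ℝ, (∀ a, |f a| ≤ |g a|) → nX f ≤ nX g)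
    (hXhom : ∀ (c : ℝ) (f : α → ℝ), nX (c • f) = |c| * nX f)
    (hXconv : ∀ x ∈ X, ∀ y ∈ X,
      nX (fun a => (|x a| ^ r + |y a| ^ r) ^ r⁻¹) ≤ (nX x ^ r + nX y ^ r) ^ r⁻¹)
    (hYnonneg : ∀ f : β → ℝ, 0 ≤ nY f)
    (hYmono : ∀ f g : β → ℝ, (∀ b, |f b| ≤ |g b|) → nY f ≤ nY g)
    (hYhom : ∀ (c : ℝ) (f : β → ℝ), nY (c • f) = |c| * nY f)
    (hYadd : ∀ f g : β → ℝ, nY (f + g) ≤ nY f + nY g)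
    (hYstrict : ∀ u v : β → ℝ, (∀ b, 0 ≤ u b) → (∀ b, u b ≤ v b) → nY u = nY v → u = v)
    (hYconv : ∀ x ∈ Y, ∀ y ∈ Y,
      nY (fun b => (|x b| ^ r + |y b| ^ r) ^ r⁻¹) ≤ (nY x ^ r + nY y ^ r) ^ r⁻¹)
    (T : (α → ℝ) → (β → ℝ))
    (hTmem : ∀ x ∈ X, T x ∈ Y)
    (hTadd : ∀ x ∈ X, ∀ y ∈ X, T (x + y) = T x + T y)
    (hTsmul : ∀ (c : ℝ), ∀ x ∈ X, T (c • x) = c • T x)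
    (hTiso : ∀ x ∈ X, nY (T x) = nX x) :
    ∀ x ∈ X, ∀ y ∈ X, (∀ a, min |x a| |y a| = 0) → ∀ b, min |T x b| |T y b| = 0 := by
  intro x hx y hy hdisj b₀
  by_contra hne
  have hrne : r ≠ 0 := by linarith
  have hr0 : (0:ℝ) < r := by linarith
  have hrinv0 : (0:ℝ) < r⁻¹ := by positivity
  set u : β → ℝ := T x with hu
  set v : β → ℝ := T y with hv
  -- the bad point
  have hmin0 : 0 ≤ min |u b₀| |v b₀| := le_min (abs_nonneg _) (abs_nonneg _)
  have hposmin : 0 < min |u b₀| |v b₀| := lt_of_le_of_ne hmin0 (Ne.symm hne)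
  have hU0 : 0 < |u b₀| := lt_of_lt_of_le hposmin (min_le_left _ _)
  have hV0 : 0 < |v b₀| := lt_of_lt_of_le hposmin (min_le_right _ _)
  -- pointwise disjointness of x, y
  have hdis : ∀ a, x a = 0 ∨ y a = 0 := by
    intro a
    rcases min_choice |x a| |y a| with h | h
    · left; have : |x a| = 0 := by rw [← h]; exact hdisj a
      exact abs_eq_zero.mp this
    · right; have : |y a| = 0 := by rw [← h]; exact hdisj a
      exact abs_eq_zero.mp this
  -- functions
  set afun : β → ℝ := fun b => |u b| with hafun
  set hfun : β → ℝ := fun b => min |u b| ((v b) ^ 2 / (2 * (|u b| + |v b|))) with hhfun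
  have hh0 : ∀ b, 0 ≤ hfun b := fun b =>
    le_min (abs_nonneg _) (div_nonneg (sq_nonneg _) (by positivity))
  have hhle : ∀ b, hfun b ≤ afun b := fun b => min_le_left _ _
  have hhb₀ : 0 < hfun b₀ := by
    apply lt_min hU0
    apply div_pos
    · have : v b₀ ≠ 0 := abs_pos.mp hV0
      positivity
    · positivity
  -- basic norms
  have hnY0 : nY (fun _ => (0:ℝ)) = 0 := by
    have h := hYhom 0 (fun _ => (0:ℝ))
    have e : (0:ℝ) • (fun _ => (0:ℝ)) = (fun _ : β => (0:ℝ)) := by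
      funext b; simp
    rw [e] at h
    simpa using h
  have hAa : nY afun = nY u := by
    apply le_antisymm
    · exact hYmono afun u (fun b => by simp [hafun])
    · exact hYmono u afun (fun b => by simp [hafun])
  set A := nX x with hA
  have hAu : nY afun = A := by rw [hAa, hu]; exact hTiso x hx
  have hApos : 0 < A := by
    rcases lt_or_eq_of_le (hXnonneg x) with h | h
    · exact h
    · exfalso
      have hz : nY (fun _ => (0:ℝ)) = nY afun := by rw [hnY0, hAu, hA]; exact h
      have := hYstrict (fun _ => (0:ℝ)) afun (fun _ => le_refl 0)
        (fun b => abs_nonneg _) hz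
      have := congrFun this b₀
      simp only [hafun] at this
      exact absurd this.symm (ne_of_gt hU0)
  set M := nX (x + y) with hM
  have hxy_mem : x + y ∈ X := X.add_mem hx hy
  have hAM : A ≤ M := by
    apply hXmono
    intro a
    rcases hdis a with h | h <;> simp [Pi.add_apply, h]
  have hMpos : 0 < M := lt_of_lt_of_le hApos hAM
  -- κ
  set g2 : β → ℝ := fun b => afun b - hfun b with hg2
  have hg2nonneg : ∀ b, 0 ≤ g2 b := fun b => sub_nonneg.mpr (hhle b)
  have hg2le : nY g2 ≤ nY afun := by
    apply hYmono
    intro b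
    rw [abs_of_nonneg (hg2nonneg b), hafun]
    simp only [hg2]
    have := hh0 b
    simp only [abs_abs]
    linarith [hhle b]
  have hg2ne : nY g2 ≠ nY afun := by
    intro heq
    have := hYstrict g2 afun hg2nonneg (fun b => by
      simp only [hg2]; linarith [hh0 b]) heq
    have := congrFun this b₀
    simp only [hg2] at this
    have : hfun b₀ = 0 := by linarith [this]
    exact absurd this (ne_of_gt hhb₀)
  set κ := nY afun - nY g2 with hκdef
  have hκ : 0 < κ := sub_pos.mpr (lt_of_le_of_ne hg2le hg2ne)
  set C := M ^ r * A / A ^ r with hC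
  have hC0 : 0 < C :=
    div_pos (mul_pos (Real.rpow_pos_of_pos hMpos r) hApos) (Real.rpow_pos_of_pos hApos r)
  -- choose t
  set tstar := (κ / (2 * C)) ^ (r - 2)⁻¹ with htstar
  set t := min 1 tstar with ht
  have hκ2C : 0 < κ / (2 * C) := div_pos hκ (by linarith)
  have ht0 : 0 < t := lt_min one_pos (Real.rpow_pos_of_pos hκ2C _)
  have ht1 : t ≤ 1 := min_le_left _ _
  have hr2ne : r - 2 ≠ 0 := by linarith
  have hr2pos : (0:ℝ) < r - 2 := by linarith
  have hCt : C * t ^ (r - 2) < κ := by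
    rcases le_total tstar 1 with hc | hc
    · have hteq : t = tstar := min_eq_right hc
      rw [hteq, htstar, Real.rpow_inv_rpow (le_of_lt hκ2C) hr2ne]
      have hmul : C * (κ / (2 * C)) = κ / 2 := by
        field_simp
      rw [hmul]
      linarith
    · have hteq : t = 1 := min_eq_left hc
      rw [hteq, Real.one_rpow, mul_one]
      by_contra hcon
      push_neg at hcon
      have hhalf : κ / (2 * C) < 1 := by
        rw [div_lt_one (by positivity)]
        linarith
      have : tstar < 1 :=
        Real.rpow_lt_one (le_of_lt hκ2C) hhalf (by positivity)
      linarith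
  -- ===== chain (I): Y lower bound =====
  set g1 : β → ℝ := fun b => afun b + t ^ 2 * hfun b with hg1
  have hsplit : (1 + t ^ 2) • afun = g1 + t ^ 2 • g2 := by
    funext b
    simp only [Pi.smul_apply, Pi.add_apply, smul_eq_mul, hg1, hg2]
    ring
  have hlower : A + κ * t ^ 2 ≤ nY g1 := by
    have h1 : nY ((1 + t ^ 2) • afun) = (1 + t ^ 2) * nY afun := by
      rw [hYhom, abs_of_nonneg (by positivity)]
    have h2 : nY (g1 + t ^ 2 • g2) ≤ nY g1 + t ^ 2 * nY g2 := by
      calc nY (g1 + t ^ 2 • g2) ≤ nY g1 + nY (t ^ 2 • g2) := hYadd _ _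
        _ = nY g1 + t ^ 2 * nY g2 := by rw [hYhom, abs_of_nonneg (by positivity)]
    have h3 : (1 + t ^ 2) * nY afun ≤ nY g1 + t ^ 2 * nY g2 := by
      rw [← h1, hsplit]; exact h2
    have hg2A : nY g2 = A - κ := by rw [hκdef, hAu]; ring
    rw [hAu] at h3
    rw [hg2A] at h3
    nlinarith
  -- ===== chain (II): Y convexity =====
  set w1 : β → ℝ := u + t • v with hw1
  set w2 : β → ℝ := u - t • v with hw2
  have hty_mem : t • y ∈ X := X.smul_mem t hy
  have hxty_mem : x + t • y ∈ X := X.add_mem hx hty_mem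
  have hw1mem : w1 ∈ Y := by
    rw [hw1, hu, hv]
    exact Y.add_mem (hTmem x hx) (Y.smul_mem t (hTmem y hy))
  have hw2mem : w2 ∈ Y := by
    rw [hw2, hu, hv]
    exact Y.sub_mem (hTmem x hx) (Y.smul_mem t (hTmem y hy))
  set Nt := nX (x + t • y) with hNt
  have hNt0 : 0 ≤ Nt := hXnonneg _
  have hTw1 : T (x + t • y) = w1 := by
    rw [hTadd x hx (t • y) hty_mem, hTsmul t y hy, hw1, hu, hv]
  have hnYw1 : nY w1 = Nt := by rw [← hTw1, hNt]; exact hTiso _ hxty_mem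
  have hmty_mem : (-t) • y ∈ X := X.smul_mem _ hy
  have hxmty_mem : x + (-t) • y ∈ X := X.add_mem hx hmty_mem
  have hTw2 : T (x + (-t) • y) = w2 := by
    rw [hTadd x hx ((-t) • y) hmty_mem, hTsmul (-t) y hy, hw2, hu, hv]
    funext b
    simp only [Pi.add_apply, Pi.sub_apply, Pi.smul_apply, smul_eq_mul]
    ring
  have hnYw2 : nY w2 = Nt := by
    rw [← hTw2, hTiso _ hxmty_mem, hNt]
    apply le_antisymm <;> apply hXmono <;> intro a <;>
      rcases hdis a with h | h <;>
      simp only [Pi.add_apply, Pi.smul_apply, smul_eq_mul, h] <;> ring_nf <;>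
      simp [abs_neg, neg_mul, abs_mul]
  have hconvY := hYconv w1 hw1mem w2 hw2mem
  rw [hnYw1, hnYw2] at hconvY
  have hRHS : (Nt ^ r + Nt ^ r) ^ r⁻¹ = (2:ℝ) ^ r⁻¹ * Nt := by
    have : Nt ^ r + Nt ^ r = 2 * Nt ^ r := by ring
    rw [this, Real.mul_rpow (by norm_num) (Real.rpow_nonneg hNt0 _),
      Real.rpow_rpow_inv hNt0 hrne]
  rw [hRHS] at hconvY
  -- pointwise comparison
  have hptY : ∀ b, |((2:ℝ) ^ r⁻¹ • g1) b| ≤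
      |(fun b => (|w1 b| ^ r + |w2 b| ^ r) ^ r⁻¹) b| := by
    intro b
    have hg1b : 0 ≤ g1 b := by
      simp only [hg1]; have := hh0 b; have : (0:ℝ) ≤ afun b := abs_nonneg _
      positivity
    have hrpow0 : (0:ℝ) ≤ (|w1 b| ^ r + |w2 b| ^ r) ^ r⁻¹ :=
      Real.rpow_nonneg (add_nonneg (Real.rpow_nonneg (abs_nonneg _) _)
        (Real.rpow_nonneg (abs_nonneg _) _)) _
    simp only [Pi.smul_apply, smul_eq_mul]
    rw [abs_of_nonneg (mul_nonneg (Real.rpow_nonneg (by norm_num) _) hg1b),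
      abs_of_nonneg hrpow0]
    have hw1b : w1 b = u b + t * v b := by simp [hw1]
    have hw2b : w2 b = u b - t * v b := by simp [hw2]
    rw [hw1b, hw2b]
    simpa only [hg1, hafun, hhfun] using stmt13_key r hr (u b) (v b) t ht0 ht1
  have hg1Nt : nY g1 ≤ Nt := by
    have h1 : nY ((2:ℝ) ^ r⁻¹ • g1) ≤ nY (fun b => (|w1 b| ^ r + |w2 b| ^ r) ^ r⁻¹) :=
      hYmono _ _ hptY
    have h2 : nY ((2:ℝ) ^ r⁻¹ • g1) = (2:ℝ) ^ r⁻¹ * nY g1 := by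
      rw [hYhom, abs_of_nonneg (Real.rpow_nonneg (by norm_num) _)]
    have h2pos : (0:ℝ) < (2:ℝ) ^ r⁻¹ := Real.rpow_pos_of_pos (by norm_num) _
    have := le_trans (le_of_eq h2.symm) (le_trans h1 hconvY)
    exact le_of_mul_le_mul_left this h2pos
  -- ===== chain (III): X upper bound =====
  have htr1 : t ^ r ≤ 1 := Real.rpow_le_one (le_of_lt ht0) ht1 (by linarith)
  have htrpos : 0 < t ^ r := Real.rpow_pos_of_pos ht0 _
  set lam := (1 - t ^ r) ^ r⁻¹ with hlam
  have h1tr : (0:ℝ) ≤ 1 - t ^ r := by linarith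
  have hlam0 : 0 ≤ lam := Real.rpow_nonneg h1tr _
  have hlamr : lam ^ r = 1 - t ^ r := Real.rpow_inv_rpow h1tr hrne
  have hz1mem : lam • x ∈ X := X.smul_mem _ hx
  have hz2mem : t • (x + y) ∈ X := X.smul_mem _ hxy_mem
  have hXc := hXconv (lam • x) hz1mem (t • (x + y)) hz2mem
  have hptX : ∀ a, |(x + t • y) a| ≤
      |(fun a => (|(lam • x) a| ^ r + |(t • (x + y)) a| ^ r) ^ r⁻¹) a| := by
    intro a
    have hinner0 : (0:ℝ) ≤ (|(lam • x) a| ^ r + |(t • (x + y)) a| ^ r) ^ r⁻¹ :=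
      Real.rpow_nonneg (add_nonneg (Real.rpow_nonneg (abs_nonneg _) _)
        (Real.rpow_nonneg (abs_nonneg _) _)) _
    rw [abs_of_nonneg hinner0]
    simp only [Pi.add_apply, Pi.smul_apply, smul_eq_mul]
    rcases hdis a with h | h
    · rw [h]
      have e1 : |lam * 0| ^ r = 0 := by
        simp [Real.zero_rpow hrne]
      simp only [mul_zero, abs_zero, zero_add, Real.zero_rpow hrne]
      rw [Real.rpow_rpow_inv (abs_nonneg _) hrne]
    · rw [h]
      have e1 : |lam * x a| ^ r = (1 - t ^ r) * |x a| ^ r := by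
        rw [abs_mul, abs_of_nonneg hlam0, Real.mul_rpow hlam0 (abs_nonneg _), hlamr]
      have e2 : |t * (x a + 0)| ^ r = t ^ r * |x a| ^ r := by
        rw [add_zero, abs_mul, abs_of_nonneg (le_of_lt ht0),
          Real.mul_rpow (le_of_lt ht0) (abs_nonneg _)]
      rw [e1, e2]
      have e3 : (1 - t ^ r) * |x a| ^ r + t ^ r * |x a| ^ r = |x a| ^ r := by ring
      rw [e3, Real.rpow_rpow_inv (abs_nonneg _) hrne]
      simp
  have hNtle : Nt ≤ ((1 - t ^ r) * A ^ r + t ^ r * M ^ r) ^ r⁻¹ := by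
    have h1 : Nt ≤ nX (fun a => (|(lam • x) a| ^ r + |(t • (x + y)) a| ^ r) ^ r⁻¹) := by
      rw [hNt]; exact hXmono _ _ hptX
    have h2 : nX (lam • x) = lam * A := by rw [hXhom, abs_of_nonneg hlam0, hA]
    have h3 : nX (t • (x + y)) = t * M := by
      rw [hXhom, abs_of_nonneg (le_of_lt ht0), hM]
    rw [h2, h3] at hXc
    have h4 : (lam * A) ^ r = (1 - t ^ r) * A ^ r := by
      rw [Real.mul_rpow hlam0 (le_of_lt hApos), hlamr]
    have h5 : (t * M) ^ r = t ^ r * M ^ r := by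
      rw [Real.mul_rpow (le_of_lt ht0) (le_of_lt hMpos)]
    rw [h4, h5] at hXc
    exact le_trans h1 hXc
  -- ===== chain (IV): numeric conclusion =====
  have hAr : (0:ℝ) < A ^ r := Real.rpow_pos_of_pos hApos _
  have hMr : (0:ℝ) < M ^ r := Real.rpow_pos_of_pos hMpos _
  have htrM : (0:ℝ) ≤ t ^ r * M ^ r := mul_nonneg (le_of_lt htrpos) (le_of_lt hMr)
  have h1A : (0:ℝ) ≤ (1 - t ^ r) * A ^ r := mul_nonneg h1tr (le_of_lt hAr)
  have h1A' : (1 - t ^ r) * A ^ r ≤ A ^ r := by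
    have h := mul_le_mul_of_nonneg_right (by linarith : 1 - t ^ r ≤ 1) (le_of_lt hAr)
    rw [one_mul] at h
    exact h
  have hfinal1 : ((1 - t ^ r) * A ^ r + t ^ r * M ^ r) ^ r⁻¹ ≤ (A ^ r + t ^ r * M ^ r) ^ r⁻¹ :=
    Real.rpow_le_rpow (by linarith) (by linarith) (le_of_lt hrinv0)
  have hfinal2 : (A ^ r + t ^ r * M ^ r) ^ r⁻¹ ≤ A + C * t ^ r := by
    have hy0 : (0:ℝ) ≤ t ^ r * M ^ r / A ^ r := by positivity
    have e1 : A ^ r + t ^ r * M ^ r = A ^ r * (1 + t ^ r * M ^ r / A ^ r) := by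
      field_simp
    rw [e1, Real.mul_rpow (le_of_lt hAr) (by linarith), Real.rpow_rpow_inv (le_of_lt hApos) hrne]
    have h6 : (1 + t ^ r * M ^ r / A ^ r) ^ r⁻¹ ≤ 1 + t ^ r * M ^ r / A ^ r := by
      calc (1 + t ^ r * M ^ r / A ^ r) ^ r⁻¹
          ≤ (1 + t ^ r * M ^ r / A ^ r) ^ (1:ℝ) := by
            apply Real.rpow_le_rpow_of_exponent_le (by linarith)
            rw [inv_eq_one_div, div_le_one hr0]
            linarith
        _ = 1 + t ^ r * M ^ r / A ^ r := Real.rpow_one _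
    calc A * (1 + t ^ r * M ^ r / A ^ r) ^ r⁻¹
        ≤ A * (1 + t ^ r * M ^ r / A ^ r) := by
          apply mul_le_mul_of_nonneg_left h6 (le_of_lt hApos)
      _ = A + C * t ^ r := by rw [hC]; field_simp
  have hchain : A + κ * t ^ 2 ≤ A + C * t ^ r :=
    le_trans hlower (le_trans hg1Nt (le_trans hNtle (le_trans hfinal1 hfinal2)))
  have hκt : κ * t ^ 2 ≤ C * t ^ r := by linarith
  have htsplit : t ^ r = t ^ (r - 2) * t ^ 2 := by
    have : t ^ r = t ^ ((r - 2) + 2) := by norm_num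
    rw [this, Real.rpow_add ht0]
    congr 1
    rw [← Real.rpow_natCast t 2]
    norm_num
  rw [htsplit] at hκt
  have ht2pos : (0:ℝ) < t ^ 2 := by positivity
  have : κ ≤ C * t ^ (r - 2) := by
    have := (mul_le_mul_iff_of_pos_right ht2pos).mp (by linarith [hκt] : κ * t ^ 2 ≤ (C * t ^ (r-2)) * t ^ 2)
    exact this
  linarith
end

section
/- Let U be a countably incomplete ultrafilter on an index set I and E a Banach lattice. If the ultrapower E_U contains a sequence (ξ_n) of normalized, positive, pairwise disjoint vectors equivalent to the unit vector basis of c₀ (in particular sup_n ‖ξ₁ + ⋯ + ξ_n‖ < ∞), then there exists a positive element ξ ∈ E_U with ξ ≥ ξ_n for all n; consequently E_U is not order continuous. -/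
open Filter

/-- Let `U` be a countably incomplete ultrafilter on `I` and `E` a Banach lattice.
If the ultrapower `E_U` contains a sequence of normalized, positive, pairwise
disjoint vectors whose partial sums are norm bounded (as for the unit basis of `c₀`),
then there is a positive element of `E_U` dominating all of them.  Here elements of
`E_U` are encoded by bounded families `I → E`; `[x] ≤ [ξ]` means
`‖(x i − ξ i)⁺‖ → 0` along `U`. -/
theorem stmt18 {I E : Type*} [NormedAddCommGroup E] [Lattice E] [Module ℝ E]
    [CovariantClass E E (· + ·) (· ≤ ·)]
    (U : Ultrafilter I)
    (hU : ∃ V : ℕ → Set I, (∀ n, V n ∈ U) ∧ (∀ n, V (n + 1) ⊆ V n) ∧ (⋂ n, V n) = ∅)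
    (x : ℕ → I → E)
    (hbd : ∀ n, ∃ B : ℝ, ∀ i, ‖x n i‖ ≤ B)
    (hpos : ∀ n i, 0 ≤ x n i)
    (hnorm : ∀ n, Tendsto (fun i => ‖x n i‖) ↑U (nhds 1))
    (hdisj : ∀ m n, m ≠ n → Tendsto (fun i => ‖x m i ⊓ x n i‖) ↑U (nhds 0))
    (hC : ∃ C : ℝ, ∀ n, ∀ᶠ i in ↑U, ‖∑ k ∈ Finset.range n, x k i‖ ≤ C) :
    ∃ ξ : I → E, (∃ B : ℝ, ∀ i, ‖ξ i‖ ≤ B) ∧ (∀ i, 0 ≤ ξ i) ∧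
      ∀ n, Tendsto (fun i => ‖(x n i - ξ i) ⊔ 0‖) ↑U (nhds 0) := by
  classical
  obtain ⟨V, hVU, hVdec, hVempty⟩ := hU
  obtain ⟨C, hCbound⟩ := hC
  -- the sets where the partial sum bound holds
  set T : ℕ → Set I := fun j => {i | ‖∑ k ∈ Finset.range j, x k i‖ ≤ C} with hT
  have hTU : ∀ j, T j ∈ U := fun j => hCbound j
  -- V is antitone
  have hVanti : ∀ {m n : ℕ}, m ≤ n → V n ⊆ V m := by
    intro m n hmn
    induction hmn with
    | refl => exact fun _ h => h
    | step h ih => exact fun i hi => ih (hVdec _ hi)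
  -- combined decreasing sets
  set A : ℕ → Set I := fun n => V n ∩ ⋂ j ∈ Finset.range (n + 2), T j with hA
  have hAU : ∀ n, A n ∈ U := by
    intro n
    exact Filter.inter_mem (hVU n) ((Filter.biInter_finset_mem _).mpr fun j _ => hTU j)
  have hAanti : ∀ {m n : ℕ}, m ≤ n → A n ⊆ A m := by
    intro m n hmn i hi
    refine ⟨hVanti hmn hi.1, ?_⟩
    have := hi.2
    simp only [Set.mem_iInter] at this ⊢
    intro j hj
    exact this j (Finset.mem_range.mpr (lt_of_lt_of_le (Finset.mem_range.mp hj)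
      (by omega)))
  have hAex : ∀ i, ∃ n, i ∉ A n := by
    intro i
    by_contra hcon
    push_neg at hcon
    have : i ∈ ⋂ n, V n := Set.mem_iInter.mpr fun n => (hcon n).1
    rw [hVempty] at this
    exact this
  -- the length function
  set m : I → ℕ := fun i => Nat.find (hAex i) with hm
  have hmem : ∀ i k, k < m i → i ∈ A k := by
    intro i k hk
    by_contra hcon
    exact absurd hk (not_lt.mpr (Nat.find_le hcon))
  have hnotmem : ∀ i, i ∉ A (m i) := fun i => Nat.find_spec (hAex i)
  refine ⟨fun i => ∑ k ∈ Finset.range (m i), x k i, ?_, ?_, ?_⟩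
  · -- boundedness
    refine ⟨max C 0, fun i => ?_⟩
    rcases Nat.eq_zero_or_pos (m i) with h0 | hp
    · simp [h0]
    · obtain ⟨j, hj⟩ : ∃ j, m i = j + 1 := ⟨m i - 1, by omega⟩
      have hi : i ∈ A j := hmem i j (by omega)
      have hiT : i ∈ T (j + 1) := by
        have := hi.2
        simp only [Set.mem_iInter] at this
        exact this (j + 1) (Finset.mem_range.mpr (by omega))
      show ‖∑ k ∈ Finset.range (m i), x k i‖ ≤ max C 0
      rw [hj]
      exact le_max_of_le_left hiT
  · -- positivity
    intro i
    refine Finset.sum_induction _ (fun y => 0 ≤ y) ?_ le_rfl fun k _ => hpos k i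
    intro a b ha hb
    calc (0 : E) ≤ a := ha
    _ = a + 0 := (add_zero a).symm
    _ ≤ a + b := add_le_add_right hb a
  · -- domination
    intro n
    have hev : ∀ᶠ i in (U : Filter I),
        ‖(x n i - ∑ k ∈ Finset.range (m i), x k i) ⊔ 0‖ = 0 := by
      filter_upwards [hAU n] with i hi
      have hlt : n < m i := by
        by_contra hcon
        push_neg at hcon
        exact hnotmem i (hAanti hcon hi)
      have hmemn : n ∈ Finset.range (m i) := Finset.mem_range.mpr hlt
      have hle : x n i ≤ ∑ k ∈ Finset.range (m i), x k i := by
        rw [← Finset.add_sum_erase _ _ hmemn]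
        refine le_add_of_nonneg_right ?_
        refine Finset.sum_induction _ (fun y => 0 ≤ y) ?_ le_rfl fun k _ => hpos k i
        intro a b ha hb
        calc (0 : E) ≤ a := ha
        _ = a + 0 := (add_zero a).symm
        _ ≤ a + b := add_le_add_right hb a
      have : (x n i - ∑ k ∈ Finset.range (m i), x k i) ⊔ 0 = 0 :=
        sup_eq_right.mpr (sub_nonpos.mpr hle)
      rw [this, norm_zero]
    have : Tendsto (fun _ : I => (0 : ℝ)) (U : Filter I) (nhds 0) := tendsto_const_nhds
    exact this.congr' (hev.mono fun i h => h.symm)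
end

section
/- Let E be a real Banach space with a complexification E_ℂ = E + iE carrying the complex-lattice modulus (computed, e.g., pointwise in a Banach function space realization). For every x = a + ib ∈ E_ℂ with a, b ∈ E and every t ∈ ℝ with |t| < 1, one has |x| + t a ≤ | |x| + t x | ≤ (1 + t²/(1−|t|)²)^{1/2} (|x| + t a); consequently (1/t)(| |x| + t x | − |x|) converges in norm to a = Re x as t → 0⁺. -/
set_option maxHeartbeats 1000000


open Filter

/-- In a complex Banach function space (pointwise modulus, with a monotone,
subadditive, homogeneous norm `nrm` on real functions), for `x = a + ib` and `|t| < 1`,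
`|x| + t a ≤ ||x| + t x| ≤ (1 + t²/(1−|t|)²)^{1/2} (|x| + t a)` pointwise; consequently
`(1/t)(||x| + t x| − |x|) → Re x` in norm as `t → 0⁺`. -/
theorem stmt19 {α : Type*} (nrm : (α → ℝ) → ℝ)
    (hmono : ∀ f g : α → ℝ, (∀ i, |f i| ≤ |g i|) → nrm f ≤ nrm g)
    (hadd : ∀ f g : α → ℝ, nrm (f + g) ≤ nrm f + nrm g)
    (hsmul : ∀ (c : ℝ) (f : α → ℝ), nrm (c • f) = |c| * nrm f)
    (x : α → ℂ) :
    (∀ t : ℝ, |t| < 1 → ∀ i,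
      ‖x i‖ + t * (x i).re
          ≤ ‖(‖x i‖ : ℂ) + t * x i‖ ∧
      ‖(‖x i‖ : ℂ) + t * x i‖
          ≤ Real.sqrt (1 + t ^ 2 / (1 - |t|) ^ 2) * (‖x i‖ + t * (x i).re))
    ∧ Tendsto
        (fun t : ℝ => nrm (fun i =>
          t⁻¹ * (‖(‖x i‖ : ℂ) + t * x i‖ - ‖x i‖)
            - (x i).re))
        (nhdsWithin 0 (Set.Ioi 0)) (nhds 0) := by
  have key : ∀ t : ℝ, |t| < 1 → ∀ i,
      ‖x i‖ + t * (x i).re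
          ≤ ‖(‖x i‖ : ℂ) + t * x i‖ ∧
      ‖(‖x i‖ : ℂ) + t * x i‖
          ≤ Real.sqrt (1 + t ^ 2 / (1 - |t|) ^ 2) * (‖x i‖ + t * (x i).re) := by
    intro t ht i
    set r := ‖x i‖ with hrdef
    set a := (x i).re with hadef
    set b := (x i).im with hbdef
    have hr : 0 ≤ r := norm_nonneg _
    have ha : |a| ≤ r := Complex.abs_re_le_norm _
    have hb : |b| ≤ r := Complex.abs_im_le_norm _
    have hta : |t * a| ≤ |t| * r := by
      rw [abs_mul]; exact mul_le_mul_of_nonneg_left ha (abs_nonneg t)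
    have hpos : 0 ≤ r + t * a := by
      have := neg_abs_le (t * a)
      nlinarith [abs_nonneg t]
    have hge : (1 - |t|) * r ≤ r + t * a := by
      have := neg_abs_le (t * a)
      nlinarith
    have h2r : r + t * a ≤ 2 * r := by
      have := le_abs_self (t * a)
      nlinarith
    have habs : ‖(r : ℂ) + t * x i‖
        = Real.sqrt ((r + t * a) ^ 2 + (t * b) ^ 2) := by
      rw [Complex.norm_def, Complex.normSq_apply]
      congr 1
      simp [Complex.add_re, Complex.add_im, Complex.mul_re, Complex.mul_im, hadef, hbdef]
      ring
    have hd : (0:ℝ) < 1 - |t| := by linarith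
    constructor
    · rw [habs]
      calc r + t * a = Real.sqrt ((r + t * a) ^ 2) := (Real.sqrt_sq hpos).symm
        _ ≤ _ := Real.sqrt_le_sqrt (by nlinarith [sq_nonneg (t * b)])
    · rw [habs]
      have hc : (0:ℝ) ≤ 1 + t ^ 2 / (1 - |t|) ^ 2 := by positivity
      have hsq : (t * b) ^ 2 ≤ t ^ 2 / (1 - |t|) ^ 2 * (r + t * a) ^ 2 := by
        rw [div_mul_eq_mul_div, le_div_iff₀ (by positivity)]
        have hb2 : b ^ 2 ≤ r ^ 2 := by nlinarith [neg_abs_le b, le_abs_self b]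
        have h1 : (1 - |t|) * r * ((1 - |t|) * r) ≤ (r + t * a) * (r + t * a) :=
          mul_le_mul hge hge (by positivity) hpos
        nlinarith [sq_nonneg t, h1, mul_nonneg (sq_nonneg t) (sq_nonneg (1 - |t|)),
          mul_le_mul_of_nonneg_left hb2 (mul_nonneg (sq_nonneg t) (sq_nonneg (1 - |t|))),
          mul_le_mul_of_nonneg_left h1 (sq_nonneg t)]
      calc Real.sqrt ((r + t * a) ^ 2 + (t * b) ^ 2)
          ≤ Real.sqrt ((1 + t ^ 2 / (1 - |t|) ^ 2) * (r + t * a) ^ 2) :=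
            Real.sqrt_le_sqrt (by nlinarith)
        _ = Real.sqrt (1 + t ^ 2 / (1 - |t|) ^ 2) * (r + t * a) := by
            rw [Real.sqrt_mul hc, Real.sqrt_sq hpos]
  refine ⟨key, ?_⟩
  -- nrm is nonnegative
  have hnrm0 : nrm 0 = 0 := by
    have := hsmul 0 0
    simpa using this
  have hnneg : ∀ f, 0 ≤ nrm f := by
    intro f
    have h1 : nrm (f + (-1 : ℝ) • f) ≤ nrm f + nrm ((-1 : ℝ) • f) := hadd _ _
    have h2 : nrm ((-1 : ℝ) • f) = nrm f := by rw [hsmul]; simp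
    have h3 : f + (-1 : ℝ) • f = 0 := by funext i; simp
    rw [h3, hnrm0, h2] at h1
    linarith
  set R : α → ℝ := fun i => ‖x i‖ with hRdef
  set g : ℝ → α → ℝ := fun t i =>
      t⁻¹ * (‖(‖x i‖ : ℂ) + t * x i‖ - ‖x i‖)
        - (x i).re with hgdef
  have hbound : ∀ t ∈ Set.Ioo (0:ℝ) 1, ∀ i,
      0 ≤ g t i ∧ g t i ≤ t / (1 - t) ^ 2 * R i := by
    intro t ht i
    have ht0 : 0 < t := ht.1
    have ht1 : |t| < 1 := by rw [abs_of_pos ht0]; exact ht.2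
    obtain ⟨k1, k2⟩ := key t ht1 i
    set r := ‖x i‖
    set a := (x i).re
    have hr : 0 ≤ r := norm_nonneg _
    have ha : |a| ≤ r := Complex.abs_re_le_norm _
    have hpos : 0 ≤ r + t * a := by nlinarith [neg_abs_le (t*a), abs_mul t a, mul_le_mul_of_nonneg_left ha (abs_nonneg t), abs_of_pos ht0]
    have h2r : r + t * a ≤ 2 * r := by nlinarith [le_abs_self (t*a), abs_mul t a, mul_le_mul_of_nonneg_left ha (abs_nonneg t), abs_of_pos ht0]
    constructor
    · have : r + t * a ≤ ‖(r : ℂ) + t * x i‖ := k1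
      simp only [hgdef]
      have h := mul_le_mul_of_nonneg_left (by linarith : t * a ≤ ‖(r : ℂ) + t * x i‖ - r) (inv_nonneg.mpr ht0.le)
      rw [inv_mul_cancel_left₀ ht0.ne'] at h
      linarith
    · -- upper bound
      have hd : (0:ℝ) < 1 - t := by linarith [ht.2]
      obtain ⟨c, hcdef⟩ : ∃ c : ℝ, c = t ^ 2 / (1 - |t|) ^ 2 := ⟨_, rfl⟩
      rw [← hcdef] at k2
      have hc0 : 0 ≤ c := by rw [hcdef]; positivity
      have hs : Real.sqrt (1 + c) ≤ 1 + c / 2 := by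
        rw [show (1:ℝ) + c / 2 = Real.sqrt ((1 + c/2)^2) from (Real.sqrt_sq (by linarith)).symm]
        exact Real.sqrt_le_sqrt (by nlinarith)
      have hs1 : 1 ≤ Real.sqrt (1 + c) := by
        nlinarith [Real.sq_sqrt (by linarith : (0:ℝ) ≤ 1 + c), Real.sqrt_nonneg (1 + c)]
      have hcr : c = t * (t / (1 - t) ^ 2) := by
        rw [hcdef, abs_of_pos ht0]; ring
      have hB : ‖(r : ℂ) + t * x i‖ ≤ r + t * a + t * (t / (1 - t) ^ 2 * r) := by
        calc ‖(r : ℂ) + t * x i‖ ≤ Real.sqrt (1 + c) * (r + t * a) := k2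
          _ ≤ (r + t * a) + (c / 2) * (2 * r) := by nlinarith
          _ = r + t * a + t * (t / (1 - t) ^ 2 * r) := by rw [hcr]; ring
      simp only [hgdef]
      have h := mul_le_mul_of_nonneg_left (by linarith : ‖(r : ℂ) + t * x i‖ - r ≤ t * a + t * (t / (1 - t) ^ 2 * r)) (inv_nonneg.mpr ht0.le)
      have heq : t⁻¹ * (t * a + t * (t / (1 - t) ^ 2 * r)) = a + t / (1 - t) ^ 2 * r := by
        field_simp
      rw [heq] at h
      simp only [hRdef]
      linarith
  have hmem : Set.Ioo (0:ℝ) 1 ∈ nhdsWithin (0:ℝ) (Set.Ioi 0) :=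
    Ioo_mem_nhdsGT_of_mem (by constructor <;> norm_num)
  have hup : Tendsto (fun t : ℝ => t / (1 - t) ^ 2 * nrm R)
      (nhdsWithin (0:ℝ) (Set.Ioi 0)) (nhds 0) := by
    have hca : ContinuousAt (fun t : ℝ => t / (1 - t) ^ 2 * nrm R) 0 := by
      apply ContinuousAt.mul _ continuousAt_const
      exact ContinuousAt.div continuousAt_id (by fun_prop) (by norm_num)
    have := hca.tendsto
    have h0 : (0:ℝ) / (1 - 0) ^ 2 * nrm R = 0 := by norm_num
    rw [h0] at this
    exact this.mono_left nhdsWithin_le_nhds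
  apply squeeze_zero' (g := fun t => t / (1 - t) ^ 2 * nrm R)
  · filter_upwards [hmem] with t ht
    exact hnneg _
  · filter_upwards [hmem] with t ht
    have hc0 : 0 ≤ t / (1 - t) ^ 2 := by
      have := ht.1
      positivity
    have hle : nrm (g t) ≤ nrm ((t / (1 - t) ^ 2) • R) := by
      apply hmono
      intro i
      obtain ⟨h1, h2⟩ := hbound t ht i
      have hR : 0 ≤ R i := norm_nonneg _
      rw [abs_of_nonneg h1, Pi.smul_apply, smul_eq_mul,
        abs_of_nonneg (mul_nonneg hc0 hR)]
      exact h2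
    rw [hsmul, abs_of_nonneg hc0] at hle
    exact hle
  · exact hup
end
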